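/- If f ∈ Θ and a ∈ Θ is a homogeneous polynomial of degree N, then the formal derivative with respect to q of E(a·f) equals a · (E f); equivalently, E(a·f) is obtained from a · E f by formal integration in q from 0 to q. -/

import Mathlib

variable {σ : Type*}

/-- Total degree of a monomial. -/
def monDeg (d : σ →₀ ℕ) : ℕ := d.sum fun _ n => n

/-- `Θ`: series whose coefficients vanish in degrees not divisible by `N`. -/
def InTheta (N : ℕ) (f : MvPowerSeries σ ℚ) : Prop :=
  ∀ d : σ →₀ ℕ, ¬ (N ∣ monDeg d) → MvPowerSeries.coeff d f = 0

/-- `f^(k)`: homogeneous component of total degree `N * k`. -/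
noncomputable def homComp (N : ℕ) (f : MvPowerSeries σ ℚ) (k : ℕ) : MvPowerSeries σ ℚ :=
  fun d => if monDeg d = N * k then MvPowerSeries.coeff d f else 0

/-- The operation `⊙`: `f ⊙ g = Σ_{k,ℓ} C(k+ℓ,k) f^(k) g^(ℓ)`, defined coefficientwise
(at a monomial of total degree `m`, only indices `k, ℓ ≤ m` can contribute, for `N ≥ 1`). -/
noncomputable def odot (N : ℕ) (f g : MvPowerSeries σ ℚ) : MvPowerSeries σ ℚ :=
  fun d => ∑ k ∈ Finset.range (monDeg d + 1), ∑ l ∈ Finset.range (monDeg d + 1),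
    ((k + l).choose k : ℚ) * MvPowerSeries.coeff d (homComp N f k * homComp N g l)

/-- The `E`-transform: `E f = Σ_k (q^k / k!) f^(k)`. -/
noncomputable def Etrans (N : ℕ) (f : MvPowerSeries σ ℚ) :
    PowerSeries (MvPowerSeries σ ℚ) :=
  PowerSeries.mk fun k => (k.factorial : ℚ)⁻¹ • homComp N f k

/-- `exp(q·u) = Σ_k (q^k / k!) u^k`. -/
noncomputable def expQ (u : MvPowerSeries σ ℚ) : PowerSeries (MvPowerSeries σ ℚ) :=
  PowerSeries.mk fun k => (k.factorial : ℚ)⁻¹ • u ^ k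

/-- A homogeneous polynomial of degree `N`: finitely many nonzero coefficients,
all in total degree exactly `N`. -/
def IsHomogDeg (N : ℕ) (a : MvPowerSeries σ ℚ) : Prop :=
  {d : σ →₀ ℕ | MvPowerSeries.coeff d a ≠ 0}.Finite ∧
    ∀ d : σ →₀ ℕ, MvPowerSeries.coeff d a ≠ 0 → monDeg d = N

/-- Iterated `⊙`-product of a nonempty list. -/
noncomputable def odotList (N : ℕ) : List (MvPowerSeries σ ℚ) → MvPowerSeries σ ℚ
  | [] => 1
  | [f] => f
  | f :: g :: rest => odot N f (odotList N (g :: rest))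

lemma monDeg_add (x y : σ →₀ ℕ) : monDeg (x + y) = monDeg x + monDeg y :=
  Finsupp.sum_add_index' (fun _ => rfl) (fun _ _ _ => rfl)

lemma homComp_mul_homog (N k : ℕ) (f a : MvPowerSeries σ ℚ) (ha : IsHomogDeg N a) :
    homComp N (a * f) (k + 1) = a * homComp N f k := by
  classical
  funext d
  show (if monDeg d = N * (k+1) then MvPowerSeries.coeff d (a*f) else 0)
      = MvPowerSeries.coeff d (a * homComp N f k)
  rw [MvPowerSeries.coeff_mul]
  by_cases h : monDeg d = N * (k+1)
  · rw [if_pos h, MvPowerSeries.coeff_mul]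
    refine Finset.sum_congr rfl fun p hp => ?_
    by_cases h1 : MvPowerSeries.coeff p.1 a = 0
    · simp [h1]
    · have hdeg : monDeg p.1 = N := ha.2 _ h1
      have hsum : p.1 + p.2 = d := Finset.HasAntidiagonal.mem_antidiagonal.mp hp
      have h2 : monDeg p.2 = N * k := by
        have := monDeg_add p.1 p.2
        rw [hsum, h, hdeg, Nat.mul_succ] at this
        omega
      congr 1
      simp [homComp, MvPowerSeries.coeff_apply, h2]
  · rw [if_neg h]
    symm
    refine Finset.sum_eq_zero fun p hp => ?_
    by_cases h1 : MvPowerSeries.coeff p.1 a = 0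
    · simp [h1]
    · have hdeg : monDeg p.1 = N := ha.2 _ h1
      have hsum : p.1 + p.2 = d := Finset.HasAntidiagonal.mem_antidiagonal.mp hp
      have h2 : monDeg p.2 ≠ N * k := by
        intro h2
        apply h
        have := monDeg_add p.1 p.2
        rw [hsum, hdeg, h2] at this
        rw [this]; ring
      have hz : MvPowerSeries.coeff p.2 (homComp N f k) = 0 := by
        simp [homComp, MvPowerSeries.coeff_apply, h2]
      rw [hz, mul_zero]

/-- if `f ∈ Θ` and `a` is a homogeneous polynomial of degree `N`, then
`(d/dq) E(a·f) = a · E f`. -/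
theorem derivative_Etrans_mul {σ : Type*} (N : ℕ) (hN : 1 ≤ N)
    (f a : MvPowerSeries σ ℚ) (hf : InTheta N f) (ha : IsHomogDeg N a) :
    PowerSeries.derivative (MvPowerSeries σ ℚ) (Etrans N (a * f)) =
      PowerSeries.C a * Etrans N f := by
  refine PowerSeries.ext fun k => ?_
  rw [PowerSeries.coeff_derivative, PowerSeries.coeff_C_mul]
  simp only [Etrans, PowerSeries.coeff_mk]
  rw [homComp_mul_homog N k f a ha]
  have hc : ((k : MvPowerSeries σ ℚ) + 1) = ((k + 1 : ℕ) : MvPowerSeries σ ℚ) := by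
    push_cast; ring
  rw [hc, mul_comm, ← nsmul_eq_mul, ← Nat.cast_smul_eq_nsmul ℚ, smul_smul, mul_smul_comm]
  congr 1
  rw [Nat.factorial_succ]
  push_cast
  rw [mul_inv, ← mul_assoc, mul_inv_cancel₀ (by positivity), one_mul]
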